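/- arXiv:1604.00584 — 3 statements merged into one kernel-verified Lean document; each statement's English description precedes it below -/
import Mathlib

section
/- Let G be a group, H a separable subgroup of G, and K₊, K₋ subgroups of G with H ≤ K₊, H ≤ K₋, H ≠ K₊ and H ≠ K₋. Then there exist a finite group Q and a surjective group homomorphism φ : G → Q such that [Q : φ(H)] ≥ [Q : φ(K₊)] + [Q : φ(K₋)]. -/
/-- A subgroup `H` of a group `G` is *separable* if `H` equals the intersection of
all finite-index subgroups of `G` containing `H`. -/
def Subgroup.IsSeparable {G : Type*} [Group G] (H : Subgroup G) : Prop :=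
  H = ⨅ K ∈ {K : Subgroup G | H ≤ K ∧ K.FiniteIndex}, K

theorem separable_subgroup_index_inequality_in_finite_quotient
    {G : Type*} [Group G] (H : Subgroup G) (hH : H.IsSeparable)
    (Kp Km : Subgroup G) (hKp : H ≤ Kp) (hKm : H ≤ Km)
    (hnep : H ≠ Kp) (hnem : H ≠ Km) :
    ∃ (Q : Type) (_ : Group Q) (_ : Finite Q) (φ : G →* Q),
      Function.Surjective φ ∧
        (Subgroup.map φ H).index ≥ (Subgroup.map φ Kp).index + (Subgroup.map φ Km).index := by
  obtain ⟨x, hxKp, hxH⟩ := SetLike.exists_of_lt (lt_of_le_of_ne hKp hnep)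
  obtain ⟨y, hyKm, hyH⟩ := SetLike.exists_of_lt (lt_of_le_of_ne hKm hnem)
  have hx' : x ∉ ⨅ K ∈ {K : Subgroup G | H ≤ K ∧ K.FiniteIndex}, K := hH ▸ hxH
  have hy' : y ∉ ⨅ K ∈ {K : Subgroup G | H ≤ K ∧ K.FiniteIndex}, K := hH ▸ hyH
  simp only [Subgroup.mem_iInf, Set.mem_setOf_eq, not_forall] at hx' hy'
  obtain ⟨Lp, ⟨hHLp, hLpfi⟩, hxLp⟩ := hx'
  obtain ⟨Lm, ⟨hHLm, hLmfi⟩, hyLm⟩ := hy'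
  haveI := hLpfi
  haveI := hLmfi
  set N := (Lp ⊓ Lm).normalCore with hN
  haveI : (Lp ⊓ Lm).FiniteIndex := inferInstance
  haveI : N.FiniteIndex := Subgroup.finiteIndex_normalCore (Lp ⊓ Lm)
  haveI : N.Normal := Subgroup.normalCore_normal _
  haveI hfin : Finite (G ⧸ N) := inferInstance
  haveI : Small.{0} (G ⧸ N) := by
    haveI := Fintype.ofFinite (G ⧸ N)
    exact small_of_injective (Fintype.equivFin (G ⧸ N)).injective
  let e : (G ⧸ N) ≃* Shrink.{0} (G ⧸ N) := (Shrink.mulEquiv).symm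
  set ψ := QuotientGroup.mk' N with hψ
  set φ : G →* Shrink.{0} (G ⧸ N) := e.toMonoidHom.comp ψ with hφ
  have hmapeq : ∀ S : Subgroup G,
      (Subgroup.map φ S).index = (Subgroup.map ψ S).index := by
    intro S
    rw [hφ, ← Subgroup.map_map]
    refine Subgroup.index_map_eq _ e.surjective ?_
    rw [(MonoidHom.ker_eq_bot_iff e.toMonoidHom).mpr e.injective]
    exact bot_le
  refine ⟨Shrink.{0} (G ⧸ N), inferInstance, inferInstance, φ,
    e.surjective.comp (QuotientGroup.mk'_surjective N), ?_⟩
  rw [ge_iff_le, hmapeq, hmapeq, hmapeq]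
  have hNLp : N ≤ Lp := (Subgroup.normalCore_le _).trans inf_le_left
  have hNLm : N ≤ Lm := (Subgroup.normalCore_le _).trans inf_le_right
  -- ψ x ∉ map ψ H
  have hxmap : (ψ x : G ⧸ N) ∉ Subgroup.map ψ H := by
    rintro ⟨h, hh, hhe⟩
    have hmem : h⁻¹ * x ∈ N := QuotientGroup.eq.mp hhe
    exact hxLp ((mul_mem_cancel_left (inv_mem (hHLp hh))).mp (hNLp hmem))
  have hymap : (ψ y : G ⧸ N) ∉ Subgroup.map ψ H := by
    rintro ⟨h, hh, hhe⟩
    have hmem : h⁻¹ * y ∈ N := QuotientGroup.eq.mp hhe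
    exact hyLm ((mul_mem_cancel_left (inv_mem (hHLm hh))).mp (hNLm hmem))
  have hle_p : Subgroup.map ψ H ≤ Subgroup.map ψ Kp := Subgroup.map_mono hKp
  have hle_m : Subgroup.map ψ H ≤ Subgroup.map ψ Km := Subgroup.map_mono hKm
  have hmul_p := Subgroup.relIndex_mul_index hle_p
  have hmul_m := Subgroup.relIndex_mul_index hle_m
  have hr_p : 2 ≤ (Subgroup.map ψ H).relIndex (Subgroup.map ψ Kp) := by
    have hne0 : (Subgroup.map ψ H).relIndex (Subgroup.map ψ Kp) ≠ 0 := by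
      rw [Subgroup.relIndex]
      exact Subgroup.index_ne_zero_of_finite
    have hne1 : (Subgroup.map ψ H).relIndex (Subgroup.map ψ Kp) ≠ 1 := by
      intro h1
      exact hxmap ((Subgroup.relIndex_eq_one.mp h1) ⟨x, hxKp, rfl⟩)
    omega
  have hr_m : 2 ≤ (Subgroup.map ψ H).relIndex (Subgroup.map ψ Km) := by
    have hne0 : (Subgroup.map ψ H).relIndex (Subgroup.map ψ Km) ≠ 0 := by
      rw [Subgroup.relIndex]
      exact Subgroup.index_ne_zero_of_finite
    have hne1 : (Subgroup.map ψ H).relIndex (Subgroup.map ψ Km) ≠ 1 := by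
      intro h1
      exact hymap ((Subgroup.relIndex_eq_one.mp h1) ⟨y, hyKm, rfl⟩)
    omega
  have h1 : 2 * (Subgroup.map ψ Kp).index ≤ (Subgroup.map ψ H).index := by
    calc 2 * (Subgroup.map ψ Kp).index
        ≤ (Subgroup.map ψ H).relIndex (Subgroup.map ψ Kp) * (Subgroup.map ψ Kp).index :=
          Nat.mul_le_mul_right _ hr_p
      _ = _ := hmul_p
  have h2 : 2 * (Subgroup.map ψ Km).index ≤ (Subgroup.map ψ H).index := by
    calc 2 * (Subgroup.map ψ Km).index
        ≤ (Subgroup.map ψ H).relIndex (Subgroup.map ψ Km) * (Subgroup.map ψ Km).index :=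
          Nat.mul_le_mul_right _ hr_m
      _ = _ := hmul_m
  omega
end

section
/- Let F = ℂ(t), O the valuation ring of the order-of-vanishing-at-0 valuation on F, and for n ∈ ℤ let Λ_n ⊆ F² be the O-span of (tⁿ,0),(0,t⁻ⁿ) and Λ'_n the O-span of (tⁿ,0),(0,t⁻ⁿ⁻¹). Let d ≥ 1, n : Fin d → ℤ, and let s be a nonempty subset of Fin d. In the module ∏_{i ∈ Fin d} F², define the O-submodules Λ₊ = ∏ᵢ Λ_{n i + c i}, Λ₋ = ∏ᵢ Λ_{n i}, and Λ' = ∏ᵢ Mᵢ, where c i = 1 if i ∈ s and c i = 0 otherwise, and Mᵢ = Λ'_{n i} if i ∈ s and Mᵢ = Λ_{n i} otherwise. Then t•Λ' ⊊ Λ₊ ⊊ Λ' and t•Λ' ⊊ Λ₋ ⊊ Λ'. -/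
set_option synthInstance.maxHeartbeats 1000000
set_option maxHeartbeats 1000000

open Polynomial Pointwise Multiplicative

/-- The valuation ring of the order-of-vanishing-at-0 valuation on `F = ℂ(t)`,
i.e. the `(t)`-adic valuation subring of the rational function field `RatFunc ℂ`
(the localization of `ℂ[t]` at the prime ideal `(t)`). -/
noncomputable abbrev Ozero : ValuationSubring (RatFunc ℂ) :=
  ((Polynomial.idealX ℂ).valuation (RatFunc ℂ)).valuationSubring

/-- The lattice `Λ_n ⊆ F²` spanned over `O` by `(tⁿ, 0)` and `(0, t⁻ⁿ)`. -/
noncomputable def Lam (n : ℤ) : Submodule Ozero (RatFunc ℂ × RatFunc ℂ) :=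
  Submodule.span Ozero {((RatFunc.X : RatFunc ℂ) ^ n, 0), (0, (RatFunc.X : RatFunc ℂ) ^ (-n))}

/-- The lattice `Λ'_n ⊆ F²` spanned over `O` by `(tⁿ, 0)` and `(0, t⁻ⁿ⁻¹)`. -/
noncomputable def Lam' (n : ℤ) : Submodule Ozero (RatFunc ℂ × RatFunc ℂ) :=
  Submodule.span Ozero {((RatFunc.X : RatFunc ℂ) ^ n, 0), (0, (RatFunc.X : RatFunc ℂ) ^ (-n - 1))}

/-- General diagonal lattice `span {(X^a,0),(0,X^b)}`. -/
noncomputable def Ld (a b : ℤ) : Submodule Ozero (RatFunc ℂ × RatFunc ℂ) :=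
  Submodule.span Ozero {((RatFunc.X : RatFunc ℂ) ^ a, 0), (0, (RatFunc.X : RatFunc ℂ) ^ b)}

lemma Lam_eq (n : ℤ) : Lam n = Ld n (-n) := rfl
lemma Lam'_eq (n : ℤ) : Lam' n = Ld n (-n - 1) := rfl

lemma X_zpow_mem_iff (k : ℤ) : (RatFunc.X : RatFunc ℂ) ^ k ∈ Ozero ↔ 0 ≤ k := by
  have h : ((Polynomial.idealX ℂ).valuation (RatFunc ℂ)) ((RatFunc.X : RatFunc ℂ) ^ k)
      = ((Multiplicative.ofAdd (-k) : Multiplicative ℤ) : WithZero (Multiplicative ℤ)) := by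
    rw [map_zpow₀, Polynomial.valuation_X_eq_neg_one, WithZero.exp, ← WithZero.coe_zpow, WithZero.coe_inj,
      ← ofAdd_zsmul]
    simp
  rw [Valuation.mem_valuationSubring_iff, h, ← WithZero.coe_one, WithZero.coe_le_coe,
    ← ofAdd_zero, Multiplicative.ofAdd_le]
  omega

lemma mem_Ld_iff (a b : ℤ) (x y : RatFunc ℂ) :
    (x, y) ∈ Ld a b ↔ x * (RatFunc.X : RatFunc ℂ) ^ (-a) ∈ Ozero ∧
      y * (RatFunc.X : RatFunc ℂ) ^ (-b) ∈ Ozero := by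
  have hX : (RatFunc.X : RatFunc ℂ) ≠ 0 := RatFunc.X_ne_zero
  have hpow : ∀ k : ℤ, (RatFunc.X : RatFunc ℂ) ^ k ≠ 0 := fun k => zpow_ne_zero k hX
  rw [Ld, Submodule.mem_span_pair]
  constructor
  · rintro ⟨c, e, h⟩
    have hx : x = (c : RatFunc ℂ) * (RatFunc.X : RatFunc ℂ) ^ a := by
      have := congrArg Prod.fst h
      simpa [Prod.smul_mk, smul_eq_mul, Algebra.smul_def, ValuationSubring.algebraMap_apply] using this.symm
    have hy : y = (e : RatFunc ℂ) * (RatFunc.X : RatFunc ℂ) ^ b := by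
      have := congrArg Prod.snd h
      simpa [Prod.smul_mk, smul_eq_mul, Algebra.smul_def, ValuationSubring.algebraMap_apply] using this.symm
    constructor
    · have : x * (RatFunc.X : RatFunc ℂ) ^ (-a) = (c : RatFunc ℂ) := by
        rw [hx, mul_assoc, ← zpow_add₀ hX]; simp
      rw [this]; exact c.2
    · have : y * (RatFunc.X : RatFunc ℂ) ^ (-b) = (e : RatFunc ℂ) := by
        rw [hy, mul_assoc, ← zpow_add₀ hX]; simp
      rw [this]; exact e.2
  · rintro ⟨h1, h2⟩
    refine ⟨⟨_, h1⟩, ⟨_, h2⟩, ?_⟩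
    ext
    · show x * (RatFunc.X : RatFunc ℂ) ^ (-a) * (RatFunc.X : RatFunc ℂ) ^ a + _ * 0 = x
      rw [mul_assoc, ← zpow_add₀ hX]
      simp
    · show _ * 0 + y * (RatFunc.X : RatFunc ℂ) ^ (-b) * (RatFunc.X : RatFunc ℂ) ^ b = y
      rw [mul_assoc y, ← zpow_add₀ hX]
      simp

lemma fst_mem_Ld_iff (a b p : ℤ) :
    ((RatFunc.X : RatFunc ℂ) ^ p, (0 : RatFunc ℂ)) ∈ Ld a b ↔ a ≤ p := by
  rw [mem_Ld_iff, ← zpow_add₀ RatFunc.X_ne_zero, X_zpow_mem_iff]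
  simp
  all_goals omega

lemma snd_mem_Ld_iff (a b q : ℤ) :
    ((0 : RatFunc ℂ), (RatFunc.X : RatFunc ℂ) ^ q) ∈ Ld a b ↔ b ≤ q := by
  rw [mem_Ld_iff, ← zpow_add₀ RatFunc.X_ne_zero, X_zpow_mem_iff]
  simp
  all_goals omega

lemma Ld_le_Ld {a b a' b' : ℤ} (ha : a' ≤ a) (hb : b' ≤ b) : Ld a b ≤ Ld a' b' := by
  rw [Ld, Submodule.span_le]
  rintro z (rfl | rfl)
  · exact (fst_mem_Ld_iff a' b' a).2 ha
  · exact (snd_mem_Ld_iff a' b' b).2 hb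

lemma smul_Ld (a b : ℤ) :
    (RatFunc.X : RatFunc ℂ) • Ld a b = Ld (a + 1) (b + 1) := by
  rw [Ld, Submodule.smul_span, Ld]
  congr 1
  rw [Set.smul_set_insert, Set.smul_set_singleton]
  have hX : (RatFunc.X : RatFunc ℂ) ≠ 0 := RatFunc.X_ne_zero
  have h1 : (RatFunc.X : RatFunc ℂ) • ((RatFunc.X : RatFunc ℂ) ^ a, (0 : RatFunc ℂ))
      = ((RatFunc.X : RatFunc ℂ) ^ (a + 1), (0 : RatFunc ℂ)) := by
    rw [Prod.smul_mk, smul_eq_mul, smul_eq_mul, mul_zero, zpow_add₀ hX, zpow_one, mul_comm]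
  have h2 : (RatFunc.X : RatFunc ℂ) • ((0 : RatFunc ℂ), (RatFunc.X : RatFunc ℂ) ^ b)
      = ((0 : RatFunc ℂ), (RatFunc.X : RatFunc ℂ) ^ (b + 1)) := by
    rw [Prod.smul_mk, smul_eq_mul, smul_eq_mul, mul_zero, zpow_add₀ hX, zpow_one, mul_comm]
  rw [h1, h2]

section PiLemmas

variable {d : ℕ}

lemma mySmul_pi (c : RatFunc ℂ) (hc : c ≠ 0)
    (f : ∀ _ : Fin d, Submodule Ozero (RatFunc ℂ × RatFunc ℂ)) :
    c • Submodule.pi Set.univ f = Submodule.pi Set.univ (fun i => c • f i) := by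
  ext x
  rw [← SetLike.mem_coe, Submodule.coe_pointwise_smul,
    Set.mem_smul_set_iff_inv_smul_mem₀ hc, SetLike.mem_coe, Submodule.mem_pi, Submodule.mem_pi]
  refine forall_congr' fun i => forall_congr' fun _ => ?_
  rw [← SetLike.mem_coe (p := c • f i), Submodule.coe_pointwise_smul,
    Set.mem_smul_set_iff_inv_smul_mem₀ hc, SetLike.mem_coe, Pi.smul_apply]

lemma pi_lt_pi (f g : ∀ _ : Fin d, Submodule Ozero (RatFunc ℂ × RatFunc ℂ))
    (hle : ∀ i, f i ≤ g i) (i₀ : Fin d) (w : RatFunc ℂ × RatFunc ℂ)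
    (hwg : w ∈ g i₀) (hwf : w ∉ f i₀) :
    Submodule.pi Set.univ f < Submodule.pi Set.univ g := by
  refine lt_of_le_of_ne (fun x hx => ?_) (fun h => hwf ?_)
  · rw [Submodule.mem_pi] at hx ⊢
    exact fun i hi => hle i (hx i hi)
  · have h1 : Pi.single i₀ w ∈ Submodule.pi Set.univ g := by
      rw [Submodule.mem_pi]
      intro i _
      rcases eq_or_ne i i₀ with rfl | hne
      · simpa using hwg
      · rw [Pi.single_eq_of_ne hne]; exact zero_mem _
    rw [← h] at h1
    rw [Submodule.mem_pi] at h1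
    simpa using h1 i₀ (Set.mem_univ i₀)

end PiLemmas

theorem flag_relations_pi (d : ℕ) (hd : 1 ≤ d) (n : Fin d → ℤ)
    (s : Finset (Fin d)) (hs : s.Nonempty) :
    (RatFunc.X : RatFunc ℂ) •
        Submodule.pi Set.univ (fun i : Fin d => if i ∈ s then Lam' (n i) else Lam (n i)) <
      Submodule.pi Set.univ (fun i : Fin d => Lam (n i + if i ∈ s then 1 else 0)) ∧
    Submodule.pi Set.univ (fun i : Fin d => Lam (n i + if i ∈ s then 1 else 0)) <
      Submodule.pi Set.univ (fun i : Fin d => if i ∈ s then Lam' (n i) else Lam (n i)) ∧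
    (RatFunc.X : RatFunc ℂ) •
        Submodule.pi Set.univ (fun i : Fin d => if i ∈ s then Lam' (n i) else Lam (n i)) <
      Submodule.pi Set.univ (fun i : Fin d => Lam (n i)) ∧
    Submodule.pi Set.univ (fun i : Fin d => Lam (n i)) <
      Submodule.pi Set.univ (fun i : Fin d => if i ∈ s then Lam' (n i) else Lam (n i)) := by
  obtain ⟨i₀, hi₀⟩ := hs
  have hspi := mySmul_pi (RatFunc.X : RatFunc ℂ) RatFunc.X_ne_zero
    (fun i : Fin d => if i ∈ s then Lam' (n i) else Lam (n i))
  -- rewrite each coordinate of the smul'd lattice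
  have hsm : ∀ i : Fin d,
      (RatFunc.X : RatFunc ℂ) • (if i ∈ s then Lam' (n i) else Lam (n i))
      = if i ∈ s then Ld (n i + 1) (-(n i)) else Ld (n i + 1) (-(n i) + 1) := by
    intro i
    by_cases hi : i ∈ s
    · simp only [hi, if_true, Lam'_eq, smul_Ld]
      congr 1
      omega
    · simp only [hi, if_false, Lam_eq, smul_Ld]
  rw [hspi]
  simp only [hsm]
  refine ⟨?_, ?_, ?_, ?_⟩
  · -- t•Λ' < Λ₊
    refine pi_lt_pi _ _ (fun i => ?_) i₀ (0, (RatFunc.X : RatFunc ℂ) ^ (-(n i₀) - 1)) ?_ ?_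
    · by_cases hi : i ∈ s
      · simp only [hi, if_true, Lam_eq]
        exact Ld_le_Ld (by omega) (by omega)
      · simp only [hi, if_false, Lam_eq]
        exact Ld_le_Ld (by omega) (by omega)
    · simp only [hi₀, if_true, Lam_eq]
      rw [snd_mem_Ld_iff]
      omega
    · simp only [hi₀, if_true]
      rw [snd_mem_Ld_iff]
      omega
  · -- Λ₊ < Λ'
    refine pi_lt_pi _ _ (fun i => ?_) i₀ ((RatFunc.X : RatFunc ℂ) ^ (n i₀), 0) ?_ ?_
    · by_cases hi : i ∈ s
      · simp only [hi, if_true, Lam_eq, Lam'_eq]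
        exact Ld_le_Ld (by omega) (by omega)
      · simp only [hi, if_false, Lam_eq]
        exact Ld_le_Ld (by omega) (by omega)
    · simp only [hi₀, if_true, Lam'_eq]
      rw [fst_mem_Ld_iff]
    · simp only [hi₀, if_true, Lam_eq]
      rw [fst_mem_Ld_iff]
      omega
  · -- t•Λ' < Λ₋
    refine pi_lt_pi _ _ (fun i => ?_) i₀ ((RatFunc.X : RatFunc ℂ) ^ (n i₀), 0) ?_ ?_
    · by_cases hi : i ∈ s
      · simp only [hi, if_true, Lam_eq]
        exact Ld_le_Ld (by omega) (by omega)
      · simp only [hi, if_false, Lam_eq]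
        exact Ld_le_Ld (by omega) (by omega)
    · rw [Lam_eq, fst_mem_Ld_iff]
    · simp only [hi₀, if_true]
      rw [fst_mem_Ld_iff]
      omega
  · -- Λ₋ < Λ'
    refine pi_lt_pi _ _ (fun i => ?_) i₀ (0, (RatFunc.X : RatFunc ℂ) ^ (-(n i₀) - 1)) ?_ ?_
    · by_cases hi : i ∈ s
      · simp only [hi, if_true, Lam_eq, Lam'_eq]
        exact Ld_le_Ld (by omega) (by omega)
      · simp only [hi, if_false]
        exact le_rfl
    · simp only [hi₀, if_true, Lam'_eq]
      rw [snd_mem_Ld_iff]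
    · rw [Lam_eq, snd_mem_Ld_iff]
      omega
end

section
/- Let F = ℂ(t), O the valuation ring of the order-of-vanishing-at-0 valuation on F, and for n ∈ ℤ let Λ_n ⊆ F² be the O-span of (tⁿ,0),(0,t⁻ⁿ). Let d ≥ 1, σ a permutation of Fin d, and m, n : Fin d → ℤ. Consider the F-linear map T on ∏_{i ∈ Fin d} F² sending (xⱼ, yⱼ)_{j} to the tuple whose σ(j)-th component is (t^{m j}·xⱼ, t^{-m j}·yⱼ). Then the image under T of the O-submodule ∏ᵢ Λ_{n i} equals ∏ᵢ Λ_{n(σ⁻¹ i) + m(σ⁻¹ i)}. -/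
set_option maxHeartbeats 1000000
set_option synthInstance.maxHeartbeats 1000000

open Polynomial Pointwise

/-- The `F`-linear map `(x, y) ↦ (tᵐ·x, t⁻ᵐ·y)` on `F²`, i.e. the action of the
matrix `diag(tᵐ, t⁻ᵐ) ∈ SL₂(F)`. -/
noncomputable def diagMap (m : ℤ) : (RatFunc ℂ × RatFunc ℂ) →ₗ[RatFunc ℂ] (RatFunc ℂ × RatFunc ℂ) :=
  LinearMap.prodMap
    ((RatFunc.X : RatFunc ℂ) ^ m • LinearMap.id)
    ((RatFunc.X : RatFunc ℂ) ^ (-m) • LinearMap.id)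

/-- The block-monomial `F`-linear map on `∏_{i ∈ Fin d} F²` sending `(xⱼ, yⱼ)ⱼ` to the
tuple whose `σ(j)`-th component is `(t^{m j}·xⱼ, t^{-m j}·yⱼ)`. -/
noncomputable def blockMonomialMap (d : ℕ) (σ : Equiv.Perm (Fin d)) (m : Fin d → ℤ) :
    (Fin d → RatFunc ℂ × RatFunc ℂ) →ₗ[RatFunc ℂ] (Fin d → RatFunc ℂ × RatFunc ℂ) :=
  LinearMap.pi fun i => (diagMap (m (σ⁻¹ i))).comp (LinearMap.proj (σ⁻¹ i))


lemma diagMap_apply (m : ℤ) (v : RatFunc ℂ × RatFunc ℂ) :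
    diagMap m v = ((RatFunc.X : RatFunc ℂ) ^ m * v.1, (RatFunc.X : RatFunc ℂ) ^ (-m) * v.2) := by
  simp [diagMap, smul_eq_mul]

lemma diagMap_diagMap (m : ℤ) (v : RatFunc ℂ × RatFunc ℂ) :
    diagMap m (diagMap (-m) v) = v := by
  simp only [diagMap_apply, neg_neg, ← mul_assoc, ← zpow_add₀ (RatFunc.X_ne_zero (K := ℂ))]
  simp

lemma map_Lam (m n : ℤ) :
    Submodule.map ((diagMap m).restrictScalars Ozero) (Lam n) = Lam (n + m) := by
  unfold Lam
  rw [Submodule.map_span]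
  congr 1
  rw [Set.image_insert_eq, Set.image_singleton]
  simp only [LinearMap.restrictScalars_apply, diagMap_apply, mul_zero,
    ← zpow_add₀ (RatFunc.X_ne_zero (K := ℂ))]
  rw [add_comm m n]
  norm_num [add_comm]

lemma mem_Lam_diagMap {n : ℤ} (m : ℤ) {v : RatFunc ℂ × RatFunc ℂ} (hv : v ∈ Lam n) :
    diagMap m v ∈ Lam (n + m) := by
  rw [← map_Lam m n]
  exact Submodule.mem_map_of_mem hv

theorem image_pi_lattice_under_blockMonomialMap
    (d : ℕ) (hd : 1 ≤ d) (σ : Equiv.Perm (Fin d)) (m n : Fin d → ℤ) :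
    Submodule.map ((blockMonomialMap d σ m).restrictScalars Ozero)
        (Submodule.pi Set.univ fun i : Fin d => Lam (n i)) =
      Submodule.pi Set.univ (fun i : Fin d => Lam (n (σ⁻¹ i) + m (σ⁻¹ i))) := by
  apply le_antisymm
  · rintro x ⟨y, hy, rfl⟩
    intro i _
    simpa [blockMonomialMap] using mem_Lam_diagMap (m (σ⁻¹ i)) (hy (σ⁻¹ i) trivial)
  · intro x hx
    refine ⟨fun j => diagMap (-(m j)) (x (σ j)), ?_, ?_⟩
    · intro j _
      have h := hx (σ j) trivial
      simp only [Equiv.Perm.inv_def, Equiv.symm_apply_apply] at h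
      have := mem_Lam_diagMap (-(m j)) h
      simpa using this
    · funext i
      simp only [blockMonomialMap, LinearMap.restrictScalars_apply, LinearMap.pi_apply,
        LinearMap.comp_apply, LinearMap.proj_apply]
      rw [diagMap_diagMap, Equiv.Perm.inv_def, Equiv.apply_symm_apply]
end
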